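/- Suppose there exists X > 0 and matrices G₁,…,G_s with X > Σ_{i=1}^s (A_i − G_i C) X (A_i − G_i C)ᵀ. Then the solutions of the Lyapunov-type difference equation X(k+1) = Σ_{i=1}^s (A_i − G_i C) X(k) (A_i − G_i C)ᵀ + G_i R G_iᵀ + Q are uniformly bounded above for any initial condition X(0) ≥ 0, where Q ≥ 0 and R ≥ 0 are fixed. -/

import Mathlib

open Matrix

variable {N : Type*} [Fintype N] [DecidableEq N]

lemma psd_smul {c : ℝ} {B : Matrix N N ℝ} (hc : 0 ≤ c) (hB : B.PosSemidef) :
    (c • B).PosSemidef := by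
  refine ⟨?_, fun x => ?_⟩
  · unfold Matrix.IsHermitian
    rw [conjTranspose_smul, hB.1]
    simp
  · have h := mul_nonneg hc (hB.2 x)
    simp only [Finsupp.mul_sum] at h
    convert h using 1
    refine Finsupp.sum_congr fun i _ => Finsupp.sum_congr fun j _ => ?_
    simp only [Matrix.smul_apply, smul_eq_mul]
    ring

lemma psd_le_smul_one {B : Matrix N N ℝ} (hB : B.IsHermitian) :
    ∃ b : ℝ, (b • (1 : Matrix N N ℝ) - B).PosSemidef := by
  obtain ⟨b, hb⟩ := Finite.exists_le hB.eigenvalues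
  refine ⟨b, ?_⟩
  have hspec := hB.spectral_theorem
  have key : b • (1 : Matrix N N ℝ) - B =
      (hB.eigenvectorUnitary : Matrix N N ℝ) *
        diagonal (fun i => b - hB.eigenvalues i) *
        (star (hB.eigenvectorUnitary : Matrix N N ℝ)) := by
    have h2 : diagonal (fun _ : N => b) = b • (1 : Matrix N N ℝ) := by
      rw [smul_one_eq_diagonal]
    have h3 : (hB.eigenvectorUnitary : Matrix N N ℝ) * (b • (1 : Matrix N N ℝ)) *
        (star (hB.eigenvectorUnitary : Matrix N N ℝ)) = b • (1 : Matrix N N ℝ) := by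
      rw [Matrix.mul_smul, Matrix.smul_mul, mul_one]
      congr 1
      exact (Matrix.mem_unitaryGroup_iff).mp hB.eigenvectorUnitary.2
    have h4 : B = (hB.eigenvectorUnitary : Matrix N N ℝ) * diagonal hB.eigenvalues *
        (star (hB.eigenvectorUnitary : Matrix N N ℝ)) := by simpa using hspec
    rw [← diagonal_sub, mul_sub, sub_mul, h2, h3, ← h4]
  rw [key, star_eq_conjTranspose]
  exact (posSemidef_diagonal_iff.mpr fun i => sub_nonneg.mpr (hb i)).mul_mul_conjTranspose_same _

lemma hermitian_sub_smul_one {B : Matrix N N ℝ} (hB : B.IsHermitian) {a : ℝ}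
    (ha : ∀ i, a ≤ hB.eigenvalues i) : (B - a • (1 : Matrix N N ℝ)).PosSemidef := by
  have hspec := hB.spectral_theorem
  have key : B - a • (1 : Matrix N N ℝ) =
      (hB.eigenvectorUnitary : Matrix N N ℝ) *
        diagonal (fun i => hB.eigenvalues i - a) *
        (star (hB.eigenvectorUnitary : Matrix N N ℝ)) := by
    have h2 : diagonal (fun _ : N => a) = a • (1 : Matrix N N ℝ) := by
      rw [smul_one_eq_diagonal]
    have h3 : (hB.eigenvectorUnitary : Matrix N N ℝ) * (a • (1 : Matrix N N ℝ)) *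
        (star (hB.eigenvectorUnitary : Matrix N N ℝ)) = a • (1 : Matrix N N ℝ) := by
      rw [Matrix.mul_smul, Matrix.smul_mul, mul_one]
      congr 1
      exact (Matrix.mem_unitaryGroup_iff).mp hB.eigenvectorUnitary.2
    have h4 : B = (hB.eigenvectorUnitary : Matrix N N ℝ) * diagonal hB.eigenvalues *
        (star (hB.eigenvectorUnitary : Matrix N N ℝ)) := by simpa using hspec
    rw [← diagonal_sub, mul_sub, sub_mul, h2, h3, ← h4]
  rw [key, star_eq_conjTranspose]
  exact (posSemidef_diagonal_iff.mpr fun i => sub_nonneg.mpr (ha i)).mul_mul_conjTranspose_same _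

lemma posdef_ge_smul_one {P : Matrix N N ℝ} (hP : P.PosDef) :
    ∃ ε : ℝ, 0 < ε ∧ (P - ε • (1 : Matrix N N ℝ)).PosSemidef := by
  rcases isEmpty_or_nonempty N with h | h
  · refine ⟨1, one_pos, ⟨?_, fun x => by rw [Subsingleton.elim x 0]; simp⟩⟩
    ext i j
    exact (IsEmpty.false i).elim
  · have hne : (Finset.univ : Finset N).Nonempty := Finset.univ_nonempty
    refine ⟨Finset.univ.inf' hne hP.1.eigenvalues, ?_, ?_⟩
    · obtain ⟨i, _, hi⟩ := Finset.exists_mem_eq_inf' hne hP.1.eigenvalues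
      rw [hi]
      exact hP.eigenvalues_pos i
    · exact hermitian_sub_smul_one hP.1 fun i => Finset.inf'_le _ (Finset.mem_univ i)

lemma posdef_dominates {P B : Matrix N N ℝ} (hP : P.PosDef) (hB : B.IsHermitian) :
    ∃ c : ℝ, 0 < c ∧ (c • P - B).PosSemidef := by
  obtain ⟨ε, hε, hPε⟩ := posdef_ge_smul_one hP
  obtain ⟨b, hb⟩ := psd_le_smul_one hB
  refine ⟨max (b / ε) 1, lt_of_lt_of_le one_pos (le_max_right _ _), ?_⟩
  set c := max (b / ε) 1 with hc_def
  have hc : 0 < c := lt_of_lt_of_le one_pos (le_max_right _ _)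
  have hcεb : b ≤ c * ε := by
    have h1 : b / ε ≤ c := le_max_left _ _
    have : (b / ε) * ε ≤ c * ε := mul_le_mul_of_nonneg_right h1 hε.le
    calc b = (b / ε) * ε := by field_simp
    _ ≤ c * ε := this
  have key : c • P - B = c • (P - ε • (1 : Matrix N N ℝ)) +
      ((c * ε - b) • (1 : Matrix N N ℝ) + (b • (1 : Matrix N N ℝ) - B)) := by
    rw [smul_sub, smul_smul, sub_smul]
    abel
  rw [key]
  exact (psd_smul hc.le hPε).add
    ((psd_smul (by linarith) Matrix.PosSemidef.one).add hb)

/-- If there exist `X > 0` and gains `G₁,…,G_s` with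
`X > Σᵢ (Aᵢ − Gᵢ C) X (Aᵢ − Gᵢ C)ᵀ`, then the solutions of the Lyapunov-type
difference equation
`X(k+1) = Σᵢ ((Aᵢ − Gᵢ C) X(k) (Aᵢ − Gᵢ C)ᵀ + Gᵢ R Gᵢᵀ) + Q`
are uniformly bounded above (in the Loewner order) for any initial condition
`X(0) ≥ 0`, where `Q ≥ 0` and `R ≥ 0`. -/
theorem lyapunov_recursion_bounded (n m s : ℕ)
    (A : Fin s → Matrix (Fin n) (Fin n) ℝ) (C : Matrix (Fin m) (Fin n) ℝ)
    (G : Fin s → Matrix (Fin n) (Fin m) ℝ)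
    (Q : Matrix (Fin n) (Fin n) ℝ) (hQ : Q.PosSemidef)
    (R : Matrix (Fin m) (Fin m) ℝ) (hR : R.PosSemidef)
    (X0 : Matrix (Fin n) (Fin n) ℝ)
    (hlyap : ∃ X : Matrix (Fin n) (Fin n) ℝ, X.PosDef ∧
      (X - ∑ i, (A i - G i * C) * X * (A i - G i * C)ᵀ).PosDef) :
    ∀ Xseq : ℕ → Matrix (Fin n) (Fin n) ℝ,
      Xseq 0 = X0 → X0.PosSemidef →
      (∀ k, Xseq (k + 1)
        = (∑ i, ((A i - G i * C) * Xseq k * (A i - G i * C)ᵀ + G i * R * (G i)ᵀ)) + Q) →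
      ∃ M : Matrix (Fin n) (Fin n) ℝ, ∀ k, (M - Xseq k).PosSemidef := by
  intro Xseq h0 hX0 hrec
  obtain ⟨X, hX, hD⟩ := hlyap
  have hS : ((∑ i, G i * R * (G i)ᵀ) + Q).PosSemidef := by
    refine Matrix.PosSemidef.add ?_ hQ
    refine Finset.sum_induction _ (fun M : Matrix (Fin n) (Fin n) ℝ => M.PosSemidef)
      (fun a b ha hb => Matrix.PosSemidef.add ha hb) Matrix.PosSemidef.zero fun i _ => ?_
    have := hR.mul_mul_conjTranspose_same (G i)
    simpa [conjTranspose_eq_transpose_of_trivial] using this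
  obtain ⟨α, hα, hαX⟩ := posdef_dominates hX hX0.1
  obtain ⟨β, hβ, hβD⟩ := posdef_dominates hD hS.1
  refine ⟨(α + β) • X, ?_⟩
  intro k
  induction k with
  | zero =>
    rw [h0]
    have key : (α + β) • X - X0 = β • X + (α • X - X0) := by
      rw [add_smul]; abel
    rw [key]
    exact (psd_smul hβ.le hX.posSemidef).add hαX
  | succ k ih =>
    rw [hrec k, Finset.sum_add_distrib]
    have e1 : ∑ i, (A i - G i * C) * ((α + β) • X - Xseq k) * (A i - G i * C)ᵀ
        = (α + β) • (∑ i, (A i - G i * C) * X * (A i - G i * C)ᵀ)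
          - ∑ i, (A i - G i * C) * Xseq k * (A i - G i * C)ᵀ := by
      rw [Finset.smul_sum, ← Finset.sum_sub_distrib]
      refine Finset.sum_congr rfl fun i _ => ?_
      rw [Matrix.mul_sub, Matrix.sub_mul, Matrix.mul_smul, Matrix.smul_mul]
    have key : (α + β) • X - ((∑ i, (A i - G i * C) * Xseq k * (A i - G i * C)ᵀ)
          + (∑ i, G i * R * (G i)ᵀ) + Q)
        = (∑ i, (A i - G i * C) * ((α + β) • X - Xseq k) * (A i - G i * C)ᵀ)
          + (α • (X - ∑ i, (A i - G i * C) * X * (A i - G i * C)ᵀ)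
            + (β • (X - ∑ i, (A i - G i * C) * X * (A i - G i * C)ᵀ)
              - ((∑ i, G i * R * (G i)ᵀ) + Q))) := by
      rw [e1]
      simp only [add_smul, smul_sub]
      abel
    rw [key]
    have hsum : (∑ i, (A i - G i * C) * ((α + β) • X - Xseq k)
        * (A i - G i * C)ᵀ).PosSemidef := by
      refine Finset.sum_induction _ (fun M : Matrix (Fin n) (Fin n) ℝ => M.PosSemidef)
        (fun a b ha hb => Matrix.PosSemidef.add ha hb) Matrix.PosSemidef.zero fun i _ => ?_
      have := ih.mul_mul_conjTranspose_same (A i - G i * C)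
      simpa [conjTranspose_eq_transpose_of_trivial] using this
    exact hsum.add ((psd_smul hα.le hD.posSemidef).add hβD)
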